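/- Let n and p be real numbers with p > 1 and n ≥ p + 4p/(p-1). Then for every continuously differentiable ξ : ℝ → ℝ whose support is a compact subset of the open interval (0,1), one has p^{p-1}(n-p) ∫_0^1 r^{n-1-p} ξ(r)^2 dr ≤ (p-1) p^{p-2} ∫_0^1 r^{n+1-p} ξ'(r)^2 dr. -/

import Mathlib

open MeasureTheory Set Real Filter


theorem stmt12 (n p : ℝ) (hp : 1 < p) (hn : p + 4 * p / (p - 1) ≤ n)
    (ξ : ℝ → ℝ) (hξ : ContDiff ℝ 1 ξ) (hξc : IsCompact (tsupport ξ))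
    (hξs : tsupport ξ ⊆ Ioo (0:ℝ) 1) :
    p ^ (p - 1) * (n - p) * ∫ r in Ioc (0:ℝ) 1, r ^ (n - 1 - p) * (ξ r) ^ 2
      ≤ (p - 1) * p ^ (p - 2) * ∫ r in Ioc (0:ℝ) 1, r ^ (n + 1 - p) * (deriv ξ r) ^ 2 := by
  have hp0 : (0:ℝ) < p := lt_trans one_pos hp
  have hp1 : (0:ℝ) < p - 1 := sub_pos.2 hp
  have hnp : 4 * p / (p - 1) ≤ n - p := by linarith
  have hnp0 : (0:ℝ) < n - p := lt_of_lt_of_le (by positivity) hnp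
  have hnn4 : 4 * p ≤ (n - p) * (p - 1) := (div_le_iff₀ hp1).1 hnp
  -- bounds on the support
  have hScpt : IsCompact (tsupport ξ ∪ {1/2}) := hξc.union isCompact_singleton
  have hSsub : tsupport ξ ∪ {1/2} ⊆ Ioo (0:ℝ) 1 := by
    refine union_subset hξs ?_
    intro x hx
    simp only [mem_singleton_iff] at hx
    subst hx
    norm_num
  obtain ⟨a, haL⟩ := hScpt.exists_isLeast ⟨1/2, Or.inr rfl⟩
  obtain ⟨b, hbG⟩ := hScpt.exists_isGreatest ⟨1/2, Or.inr rfl⟩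
  have haI : a ∈ Ioo (0:ℝ) 1 := hSsub haL.1
  have hbI : b ∈ Ioo (0:ℝ) 1 := hSsub hbG.1
  have hab : a ≤ b := hbG.2 haL.1
  have hsub : tsupport ξ ⊆ Icc a b := fun x hx =>
    ⟨haL.2 (Or.inl hx), hbG.2 (Or.inl hx)⟩
  set a' : ℝ := a / 2 with ha'def
  set b' : ℝ := (b + 1) / 2 with hb'def
  have ha'0 : 0 < a' := by simp [ha'def]; linarith [haI.1]
  have ha'a : a' < a := by simp [ha'def]; linarith [haI.1]
  have hbb' : b < b' := by simp [hb'def]; linarith [hbI.2]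
  have hb'1 : b' < 1 := by simp [hb'def]; linarith [hbI.2]
  have hab' : a' ≤ b' := by linarith
  have hIcc : Icc a b ⊆ Ioo a' b' := Icc_subset_Ioo ha'a hbb'
  have hzero : ∀ x, x ∉ Icc a b → ξ x = 0 := fun x hx =>
    image_eq_zero_of_notMem_tsupport (fun h => hx (hsub h))
  have hzero' : ∀ x, x ∉ Icc a b → deriv ξ x = 0 := by
    intro x hx
    by_contra h
    exact hx (hsub (support_deriv_subset (by exact h)))
  have hcξ : Continuous ξ := hξ.continuous
  have hcξ' : Continuous (deriv ξ) := hξ.continuous_deriv le_rfl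
  have hcont : ∀ c : ℝ, ContinuousOn (fun r : ℝ => r ^ c) (Icc a' b') := by
    intro c r hr
    exact (Real.continuousAt_rpow_const r c
      (Or.inl (ne_of_gt (lt_of_lt_of_le ha'0 hr.1)))).continuousWithinAt
  -- integrability
  have hiI : IntervalIntegrable (fun r : ℝ => r ^ (n - 1 - p) * ξ r ^ 2) volume a' b' := by
    apply ContinuousOn.intervalIntegrable
    rw [uIcc_of_le hab']
    exact (hcont _).mul (hcξ.pow 2).continuousOn
  have hiJ : IntervalIntegrable (fun r : ℝ => r ^ (n + 1 - p) * (deriv ξ r) ^ 2) volume a' b' := by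
    apply ContinuousOn.intervalIntegrable
    rw [uIcc_of_le hab']
    exact (hcont _).mul (hcξ'.pow 2).continuousOn
  have hiK : IntervalIntegrable (fun r : ℝ => r ^ (n - p) * (2 * ξ r * deriv ξ r)) volume a' b' := by
    apply ContinuousOn.intervalIntegrable
    rw [uIcc_of_le hab']
    exact (hcont _).mul (((continuous_const.mul hcξ).mul hcξ').continuousOn)
  set I : ℝ := ∫ r in a'..b', r ^ (n - 1 - p) * ξ r ^ 2 with hIdef
  set J : ℝ := ∫ r in a'..b', r ^ (n + 1 - p) * (deriv ξ r) ^ 2 with hJdef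
  set K : ℝ := ∫ r in a'..b', r ^ (n - p) * (2 * ξ r * deriv ξ r) with hKdef
  -- integration by parts
  have hder : ∀ r ∈ uIcc a' b',
      HasDerivAt (fun r : ℝ => r ^ (n - p) * ξ r ^ 2)
        ((n - p) * (r ^ (n - 1 - p) * ξ r ^ 2) + r ^ (n - p) * (2 * ξ r * deriv ξ r)) r := by
    intro r hr
    rw [uIcc_of_le hab'] at hr
    have hr0 : r ≠ 0 := ne_of_gt (lt_of_lt_of_le ha'0 hr.1)
    have h1 : HasDerivAt (fun r : ℝ => r ^ (n - p)) ((n - p) * r ^ (n - p - 1)) r :=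
      Real.hasDerivAt_rpow_const (Or.inl hr0)
    have h2 : HasDerivAt (fun x : ℝ => ξ x ^ 2) (2 * ξ r * deriv ξ r) r := by
      have h := ((hξ.differentiable one_ne_zero) r).hasDerivAt.fun_pow 2
      simpa using h
    have h3 := h1.mul h2
    refine h3.congr_deriv ?_
    have : n - p - 1 = n - 1 - p := by ring
    rw [this]
    ring
  have hIBP : (n - p) * I + K = 0 := by
    have h0 := intervalIntegral.integral_eq_sub_of_hasDerivAt hder
      ((hiI.const_mul (n - p)).add hiK)
    have hsplit : ∫ r in a'..b',
        ((n - p) * (r ^ (n - 1 - p) * ξ r ^ 2) + r ^ (n - p) * (2 * ξ r * deriv ξ r))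
        = (n - p) * I + K := by
      rw [intervalIntegral.integral_add (hiI.const_mul (n - p)) hiK,
        intervalIntegral.integral_const_mul]
    have hFa : a' ^ (n - p) * ξ a' ^ 2 = 0 := by
      rw [hzero a' (by intro h; exact absurd h.1 (not_le.2 ha'a))]
      ring
    have hFb : b' ^ (n - p) * ξ b' ^ 2 = 0 := by
      rw [hzero b' (by intro h; exact absurd h.2 (not_le.2 hbb'))]
      ring
    rw [hsplit] at h0
    rw [h0, hFa, hFb, sub_zero]
  -- pointwise Cauchy-Schwarz
  have hpt : ∀ r ∈ Icc a' b',
      -(r ^ (n - p) * (2 * ξ r * deriv ξ r))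
        ≤ (n - p) / 2 * (r ^ (n - 1 - p) * ξ r ^ 2)
          + 2 / (n - p) * (r ^ (n + 1 - p) * (deriv ξ r) ^ 2) := by
    intro r hr
    have hr0 : 0 < r := lt_of_lt_of_le ha'0 hr.1
    have e1 : r ^ (n - 1 - p) = (r ^ ((n - 1 - p) / 2)) ^ 2 := by
      rw [pow_two, ← Real.rpow_add hr0]
      congr 1; ring
    have e2 : r ^ (n + 1 - p) = (r ^ ((n + 1 - p) / 2)) ^ 2 := by
      rw [pow_two, ← Real.rpow_add hr0]
      congr 1; ring
    have e3 : r ^ ((n - 1 - p) / 2) * r ^ ((n + 1 - p) / 2) = r ^ (n - p) := by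
      rw [← Real.rpow_add hr0]
      congr 1; ring
    set u : ℝ := r ^ ((n - 1 - p) / 2) * ξ r with hu
    set v : ℝ := r ^ ((n + 1 - p) / 2) * deriv ξ r with hv
    have e4 : r ^ (n - p) * (2 * ξ r * deriv ξ r) = 2 * (u * v) := by
      rw [hu, hv, ← e3]; ring
    have hq : (n - p) / 2 * u ^ 2 + 2 / (n - p) * v ^ 2 + 2 * (u * v)
        = 2 / (n - p) * ((n - p) / 2 * u + v) ^ 2 := by
      field_simp
      ring
    have hq2 : 0 ≤ 2 / (n - p) * ((n - p) / 2 * u + v) ^ 2 := by positivity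
    calc -(r ^ (n - p) * (2 * ξ r * deriv ξ r)) = -(2 * (u * v)) := by rw [e4]
      _ ≤ (n - p) / 2 * u ^ 2 + 2 / (n - p) * v ^ 2 := by linarith
      _ = (n - p) / 2 * (r ^ (n - 1 - p) * ξ r ^ 2)
          + 2 / (n - p) * (r ^ (n + 1 - p) * (deriv ξ r) ^ 2) := by
        rw [e1, e2, hu, hv]; ring
  have hmono : -K ≤ (n - p) / 2 * I + 2 / (n - p) * J := by
    have h := intervalIntegral.integral_mono_on
      (f := fun r : ℝ => -(r ^ (n - p) * (2 * ξ r * deriv ξ r))) hab' hiK.neg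
      ((hiI.const_mul ((n - p) / 2)).add (hiJ.const_mul (2 / (n - p)))) hpt
    rw [intervalIntegral.integral_neg,
      intervalIntegral.integral_add (hiI.const_mul ((n - p) / 2)) (hiJ.const_mul (2 / (n - p))),
      intervalIntegral.integral_const_mul, intervalIntegral.integral_const_mul] at h
    exact h
  have hInn : 0 ≤ I := by
    apply intervalIntegral.integral_nonneg hab'
    intro r hr
    have hr0 : 0 < r := lt_of_lt_of_le ha'0 hr.1
    positivity
  have hkey : (n - p) / 2 * I ≤ 2 / (n - p) * J := by linarith
  have hJ : (n - p) * (n - p) * I ≤ 4 * J := by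
    have h := mul_le_mul_of_nonneg_left hkey (by positivity : (0:ℝ) ≤ 2 * (n - p))
    have e : 2 * (n - p) * (2 / (n - p) * J) = 4 * J := by
      field_simp
      ring
    have e2 : 2 * (n - p) * ((n - p) / 2 * I) = (n - p) * (n - p) * I := by ring
    linarith [h, e.le, e2.le]
  -- rewrite the set integrals as interval integrals
  have convsub : ∀ f : ℝ → ℝ, (∀ x, x ∉ Icc a b → f x = 0) →
      ∫ r in Ioc (0:ℝ) 1, f r = ∫ r in a'..b', f r := by
    intro f hf
    have hsupp : Function.support f ⊆ Ioc a' b' := by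
      intro x hx
      have hxab : x ∈ Icc a b := by
        by_contra h2
        exact hx (hf x h2)
      exact Ioo_subset_Ioc_self (hIcc hxab)
    rw [intervalIntegral.integral_eq_integral_of_support_subset hsupp]
    apply setIntegral_eq_integral_of_forall_compl_eq_zero
    intro x hx
    apply hf
    intro h2
    exact hx (Ioo_subset_Ioc_self (Icc_subset_Ioo haI.1 hbI.2 h2))
  have cI : ∫ r in Ioc (0:ℝ) 1, r ^ (n - 1 - p) * ξ r ^ 2 = I := by
    apply convsub
    intro x hx
    rw [hzero x hx]
    ring
  have cJ : ∫ r in Ioc (0:ℝ) 1, r ^ (n + 1 - p) * (deriv ξ r) ^ 2 = J := by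
    apply convsub
    intro x hx
    rw [hzero' x hx]
    ring
  rw [cI, cJ]
  -- final arithmetic
  have hq : (0:ℝ) < p ^ (p - 2) := Real.rpow_pos_of_pos hp0 _
  have hpow : p ^ (p - 1) = p ^ (p - 2) * p := by
    rw [show p - 1 = p - 2 + 1 by ring, Real.rpow_add_one (ne_of_gt hp0)]
  rw [hpow]
  have h2 : p * (n - p) * I * 4 ≤ (p - 1) * ((n - p) * (n - p)) * I := by
    nlinarith [mul_nonneg (mul_nonneg (sub_nonneg.2 hnn4) hnp0.le) hInn]
  nlinarith [mul_le_mul_of_nonneg_left hJ (mul_nonneg hp1.le hq.le),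
    mul_le_mul_of_nonneg_left h2 hq.le]
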